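/- Universal bound on the posterior mean of τ under the exponential hyperprior: Let m(y,τ) = ∫_ℝ φ(y−μ) π(μ|τ) dμ be the Horseshoe marginal likelihood and impose the hyperprior π(τ) = n e^{−nτ} 1{τ>0}. Then for every n ≥ 1 and every observation vector Y ∈ ℝⁿ, the posterior mean satisfies E[τ|Y] = ∫₀^∞ τ · n e^{−nτ} ∏_{i=1}^n m(Y_i,τ) dτ / ∫₀^∞ n e^{−nτ} ∏_{i=1}^n m(Y_i,τ) dτ ≤ (n+1)/n. -/

import Mathlib

open MeasureTheory Filter
open scoped Classical
open Set

/-- Density of `N(0,s)`. -/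
noncomputable def gauss (s x : ℝ) : ℝ :=
  (Real.sqrt (2 * Real.pi * s))⁻¹ * Real.exp (-x ^ 2 / (2 * s))

/-- Univariate Horseshoe prior density with global scale `τ`. -/
noncomputable def hs (τ θ : ℝ) : ℝ :=
  ∫ l in Set.Ioi (0 : ℝ), gauss (l ^ 2 * τ ^ 2) θ * ((2 / Real.pi) * (1 + l ^ 2)⁻¹)

/-- Horseshoe marginal likelihood `m(y,τ)`. -/
noncomputable def marg (y τ : ℝ) : ℝ :=
  ∫ μ : ℝ, gauss 1 (y - μ) * hs τ μ

lemma gauss_nonneg (s x : ℝ) : 0 ≤ gauss s x := by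
  unfold gauss; positivity

lemma weight_nonneg (l : ℝ) : 0 ≤ (2 / Real.pi) * (1 + l ^ 2)⁻¹ := by positivity

lemma weight_le_one (l : ℝ) : (2 / Real.pi) * (1 + l ^ 2)⁻¹ ≤ 1 := by
  have h1 : (2 / Real.pi) ≤ 1 := by
    rw [div_le_one Real.pi_pos]
    linarith [Real.pi_gt_three]
  have h2 : (1 + l ^ 2)⁻¹ ≤ 1 := by
    rw [inv_le_one_iff₀]; right; nlinarith [sq_nonneg l]
  calc (2 / Real.pi) * (1 + l ^ 2)⁻¹ ≤ 1 * 1 := by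
        apply mul_le_mul h1 h2 (by positivity) (by norm_num)
    _ = 1 := by norm_num

lemma hs_nonneg (τ θ : ℝ) : 0 ≤ hs τ θ :=
  setIntegral_nonneg measurableSet_Ioi fun l _ =>
    mul_nonneg (gauss_nonneg _ _) (weight_nonneg l)

lemma marg_nonneg (y τ : ℝ) : 0 ≤ marg y τ :=
  integral_nonneg fun _ => mul_nonneg (gauss_nonneg _ _) (hs_nonneg _ _)

lemma gauss_le {s : ℝ} (x : ℝ) : gauss s x ≤ (Real.sqrt (2 * Real.pi * s))⁻¹ := by
  unfold gauss
  have h : Real.exp (-x ^ 2 / (2 * s)) ≤ 1 ∨ Real.exp (-x^2/(2*s)) > 1 := le_or_gt _ 1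
  rcases le_or_gt (0:ℝ) s with hs | hs
  · have : Real.exp (-x ^ 2 / (2 * s)) ≤ 1 := by
      rw [Real.exp_le_one_iff]
      exact div_nonpos_of_nonpos_of_nonneg (neg_nonpos.mpr (by positivity)) (by linarith)
    calc (Real.sqrt (2*Real.pi*s))⁻¹ * Real.exp (-x^2/(2*s))
        ≤ (Real.sqrt (2*Real.pi*s))⁻¹ * 1 := by
          apply mul_le_mul_of_nonneg_left this (by positivity)
      _ = _ := mul_one _
  · have : Real.sqrt (2*Real.pi*s) = 0 := by
      apply Real.sqrt_eq_zero_of_nonpos; nlinarith [Real.pi_pos]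
    rw [this]; simp

/-- `e^{-x} ≤ 1/x` trick: small-`s` bound for `gauss`. -/
lemma gauss_le_small {s x : ℝ} (hs : 0 < s) (hx : x ≠ 0) :
    gauss s x ≤ (Real.sqrt (2 * Real.pi * s))⁻¹ * (2 * s / x ^ 2) := by
  unfold gauss
  apply mul_le_mul_of_nonneg_left _ (by positivity)
  have hx2 : 0 < x ^ 2 := by positivity
  have ht : 0 < x ^ 2 / (2 * s) := by positivity
  have h1 : x ^ 2 / (2 * s) ≤ Real.exp (x ^ 2 / (2 * s)) := by
    linarith [Real.add_one_le_exp (x ^ 2 / (2 * s)), Real.exp_pos (x^2/(2*s))]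
  have h2 : Real.exp (-x ^ 2 / (2 * s)) = (Real.exp (x ^ 2 / (2 * s)))⁻¹ := by
    rw [← Real.exp_neg]; ring_nf
  rw [h2]
  have h3 : (Real.exp (x ^ 2 / (2 * s)))⁻¹ ≤ (x ^ 2 / (2 * s))⁻¹ :=
    inv_anti₀ ht h1
  calc (Real.exp (x ^ 2 / (2 * s)))⁻¹ ≤ (x ^ 2 / (2 * s))⁻¹ := h3
    _ = 2 * s / x ^ 2 := by field_simp

lemma gauss_one_continuous (y : ℝ) : Continuous fun μ : ℝ => gauss 1 (y - μ) := by
  unfold gauss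
  exact continuous_const.mul (Real.continuous_exp.comp (by fun_prop))

lemma gauss_rewrite (s : ℝ) : gauss s = fun x =>
    (Real.sqrt (2 * Real.pi * s))⁻¹ * Real.exp (-((2 * s)⁻¹) * x ^ 2) := by
  funext x
  unfold gauss
  congr 1
  rw [neg_div, div_eq_mul_inv, mul_comm, neg_mul]

lemma gauss_integrable {s : ℝ} (hs : 0 < s) : Integrable (gauss s) := by
  rw [gauss_rewrite]
  exact (integrable_exp_neg_mul_sq (by positivity)).const_mul _

lemma integral_gauss {s : ℝ} (hs : 0 < s) : ∫ x : ℝ, gauss s x = 1 := by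
  rw [gauss_rewrite, MeasureTheory.integral_const_mul, integral_gaussian]
  have h1 : Real.pi / (2 * s)⁻¹ = 2 * Real.pi * s := by
    field_simp
  rw [h1]
  exact inv_mul_cancel₀ (Real.sqrt_ne_zero'.mpr (by positivity))

lemma hs_integrand_contOn {τ : ℝ} (hτ : 0 < τ) (μ : ℝ) :
    ContinuousOn (fun l => gauss (l ^ 2 * τ ^ 2) μ * ((2 / Real.pi) * (1 + l ^ 2)⁻¹))
      (Ioi (0 : ℝ)) := by
  unfold gauss
  have hc : Continuous fun l : ℝ => 2 * Real.pi * (l ^ 2 * τ ^ 2) := by fun_prop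
  apply ContinuousOn.mul
  · apply ContinuousOn.mul
    · apply ContinuousOn.inv₀ (Real.continuous_sqrt.comp hc).continuousOn
      intro l hl
      have hl0 : (0:ℝ) < l := hl
      exact (Real.sqrt_pos.mpr (by positivity)).ne'
    · apply Real.continuous_exp.comp_continuousOn
      apply ContinuousOn.div (by fun_prop) (by fun_prop)
      intro l hl
      have hl0 : (0:ℝ) < l := hl
      positivity
  · apply Continuous.continuousOn
    apply continuous_const.mul
    exact (continuous_const.add (continuous_pow 2)).inv₀ fun l => (by positivity : (0:ℝ) < 1 + l ^ 2).ne'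

lemma hs_integrand_aesm {τ : ℝ} (hτ : 0 < τ) (μ : ℝ) :
    AEStronglyMeasurable (fun l => gauss (l ^ 2 * τ ^ 2) μ * ((2 / Real.pi) * (1 + l ^ 2)⁻¹))
      (volume.restrict (Ioi (0 : ℝ))) :=
  (hs_integrand_contOn hτ μ).aestronglyMeasurable measurableSet_Ioi

lemma hs_integrand_integrable {τ : ℝ} (hτ : 0 < τ) {μ : ℝ} (hμ : μ ≠ 0) :
    IntegrableOn (fun l => gauss (l ^ 2 * τ ^ 2) μ * ((2 / Real.pi) * (1 + l ^ 2)⁻¹))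
      (Ioi (0 : ℝ)) volume := by
  have hsplit : Ioc (0:ℝ) 1 ∪ Ioi (1:ℝ) = Ioi (0:ℝ) := Ioc_union_Ioi_eq_Ioi zero_le_one
  rw [← hsplit]
  apply IntegrableOn.union
  · -- on Ioc 0 1 : bounded by a constant
    have haesm : AEStronglyMeasurable
        (fun l => gauss (l ^ 2 * τ ^ 2) μ * ((2 / Real.pi) * (1 + l ^ 2)⁻¹))
        (volume.restrict (Ioc (0:ℝ) 1)) :=
      ((hs_integrand_contOn hτ μ).mono Ioc_subset_Ioi_self).aestronglyMeasurable
        measurableSet_Ioc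
    apply Integrable.mono' (integrable_const ((Real.sqrt (2 * Real.pi * τ ^ 2))⁻¹ * (2 * τ ^ 2 / μ ^ 2))) haesm
    filter_upwards [ae_restrict_mem measurableSet_Ioc] with l hl
    have hl0 : 0 < l := hl.1
    have hl1 : l ≤ 1 := hl.2
    have hpos : 0 < l ^ 2 * τ ^ 2 := by positivity
    rw [Real.norm_of_nonneg (mul_nonneg (gauss_nonneg _ _) (weight_nonneg _))]
    have hb := gauss_le_small hpos hμ
    have hsqrt : Real.sqrt (2 * Real.pi * (l ^ 2 * τ ^ 2)) = l * Real.sqrt (2 * Real.pi * τ ^ 2) := by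
      rw [show 2 * Real.pi * (l ^ 2 * τ ^ 2) = l ^ 2 * (2 * Real.pi * τ ^ 2) by ring,
        Real.sqrt_mul (by positivity), Real.sqrt_sq hl0.le]
    have key : gauss (l ^ 2 * τ ^ 2) μ ≤ (Real.sqrt (2 * Real.pi * τ ^ 2))⁻¹ * (2 * τ ^ 2 / μ ^ 2) := by
      calc gauss (l ^ 2 * τ ^ 2) μ
          ≤ (Real.sqrt (2 * Real.pi * (l ^ 2 * τ ^ 2)))⁻¹ * (2 * (l ^ 2 * τ ^ 2) / μ ^ 2) := hb
        _ = (l * Real.sqrt (2 * Real.pi * τ ^ 2))⁻¹ * (2 * (l ^ 2 * τ ^ 2) / μ ^ 2) := by rw [hsqrt]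
        _ = (Real.sqrt (2 * Real.pi * τ ^ 2))⁻¹ * (2 * τ ^ 2 / μ ^ 2) * l := by
            rw [mul_inv]; field_simp
        _ ≤ (Real.sqrt (2 * Real.pi * τ ^ 2))⁻¹ * (2 * τ ^ 2 / μ ^ 2) * 1 := by
            apply mul_le_mul_of_nonneg_left hl1 (by positivity)
        _ = _ := mul_one _
    calc gauss (l ^ 2 * τ ^ 2) μ * ((2 / Real.pi) * (1 + l ^ 2)⁻¹)
        ≤ ((Real.sqrt (2 * Real.pi * τ ^ 2))⁻¹ * (2 * τ ^ 2 / μ ^ 2)) * 1 := by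
          apply mul_le_mul key (weight_le_one l) (weight_nonneg l) (by positivity)
      _ = _ := mul_one _
  · -- on Ioi 1 : bounded by a Cauchy tail
    have haesm : AEStronglyMeasurable
        (fun l => gauss (l ^ 2 * τ ^ 2) μ * ((2 / Real.pi) * (1 + l ^ 2)⁻¹))
        (volume.restrict (Ioi (1:ℝ))) :=
      ((hs_integrand_contOn hτ μ).mono (Ioi_subset_Ioi zero_le_one)).aestronglyMeasurable
        measurableSet_Ioi
    have hint : Integrable (fun l : ℝ => ((Real.sqrt (2 * Real.pi * τ ^ 2))⁻¹ * (2 / Real.pi)) * (1 + l ^ 2)⁻¹)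
        (volume.restrict (Ioi (1:ℝ))) :=
      (integrable_inv_one_add_sq.const_mul _).integrableOn
    apply Integrable.mono' hint haesm
    filter_upwards [ae_restrict_mem measurableSet_Ioi] with l hl
    have hl1 : (1:ℝ) < l := hl
    rw [Real.norm_of_nonneg (mul_nonneg (gauss_nonneg _ _) (weight_nonneg _))]
    have key : gauss (l ^ 2 * τ ^ 2) μ ≤ (Real.sqrt (2 * Real.pi * τ ^ 2))⁻¹ := by
      calc gauss (l ^ 2 * τ ^ 2) μ ≤ (Real.sqrt (2 * Real.pi * (l ^ 2 * τ ^ 2)))⁻¹ := gauss_le μ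
        _ ≤ (Real.sqrt (2 * Real.pi * τ ^ 2))⁻¹ := by
            apply inv_anti₀ (Real.sqrt_pos.mpr (by positivity))
            apply Real.sqrt_le_sqrt
            have hl2 : (0:ℝ) ≤ l ^ 2 - 1 := by nlinarith
            nlinarith [mul_nonneg (mul_nonneg Real.pi_pos.le (sq_nonneg τ)) hl2]
    calc gauss (l ^ 2 * τ ^ 2) μ * ((2 / Real.pi) * (1 + l ^ 2)⁻¹)
        ≤ (Real.sqrt (2 * Real.pi * τ ^ 2))⁻¹ * ((2 / Real.pi) * (1 + l ^ 2)⁻¹) := by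
          apply mul_le_mul_of_nonneg_right key (weight_nonneg l)
      _ = ((Real.sqrt (2 * Real.pi * τ ^ 2))⁻¹ * (2 / Real.pi)) * (1 + l ^ 2)⁻¹ := by ring

lemma marg_F_aesm {τ : ℝ} (hτ : 0 < τ) (y : ℝ) :
    AEStronglyMeasurable
      (fun p : ℝ × ℝ => gauss 1 (y - p.2) * (gauss (p.1 ^ 2 * τ ^ 2) p.2 * ((2 / Real.pi) * (1 + p.1 ^ 2)⁻¹)))
      ((volume.restrict (Ioi (0:ℝ))).prod volume) := by
  have hmeq : (volume.restrict (Ioi (0:ℝ))).prod volume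
      = (volume.prod volume).restrict ((Ioi (0:ℝ)) ×ˢ (univ : Set ℝ)) := by
    rw [← Measure.prod_restrict, Measure.restrict_univ]
  rw [hmeq]
  apply ContinuousOn.aestronglyMeasurable _ (measurableSet_Ioi.prod MeasurableSet.univ)
  apply ContinuousOn.mul ((gauss_one_continuous y).comp continuous_snd).continuousOn
  unfold gauss
  have hc : Continuous fun p : ℝ × ℝ => 2 * Real.pi * (p.1 ^ 2 * τ ^ 2) := by fun_prop
  apply ContinuousOn.mul
  · apply ContinuousOn.mul
    · apply ContinuousOn.inv₀ (Real.continuous_sqrt.comp hc).continuousOn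
      intro p hp
      have hp1 : (0:ℝ) < p.1 := hp.1
      exact (Real.sqrt_pos.mpr (by positivity)).ne'
    · apply Real.continuous_exp.comp_continuousOn
      apply ContinuousOn.div (by fun_prop) (by fun_prop)
      intro p hp
      have hp1 : (0:ℝ) < p.1 := hp.1
      positivity
  · apply Continuous.continuousOn
    apply continuous_const.mul
    exact (continuous_const.add ((continuous_fst.pow 2))).inv₀ fun p => (by positivity : (0:ℝ) < 1 + p.1 ^ 2).ne'

lemma marg_integrand_integrable {τ : ℝ} (hτ : 0 < τ) (y : ℝ) :
    Integrable (fun μ : ℝ => gauss 1 (y - μ) * hs τ μ) := by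
  set ν := volume.restrict (Ioi (0:ℝ)) with hν
  set F : ℝ × ℝ → ℝ := fun p =>
    gauss 1 (y - p.2) * (gauss (p.1 ^ 2 * τ ^ 2) p.2 * ((2 / Real.pi) * (1 + p.1 ^ 2)⁻¹)) with hF
  have hF_aesm : AEStronglyMeasurable F (ν.prod volume) := marg_F_aesm hτ y
  have hF_int : Integrable F (ν.prod volume) := by
    rw [integrable_prod_iff hF_aesm]
    constructor
    · filter_upwards [ae_restrict_mem measurableSet_Ioi] with l hl
      have hl0 : (0:ℝ) < l := hl
      have heq : (fun μ => F (l, μ)) = fun μ =>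
          (gauss 1 (y - μ) * ((2 / Real.pi) * (1 + l ^ 2)⁻¹)) * gauss (l ^ 2 * τ ^ 2) μ := by
        funext μ; simp only [hF]; ring
      rw [heq]
      apply Integrable.bdd_mul (c := (Real.sqrt (2 * Real.pi * 1))⁻¹) (gauss_integrable (by positivity))
      · exact ((gauss_one_continuous y).mul continuous_const).aestronglyMeasurable
      · refine Eventually.of_forall fun μ => ?_
        rw [Real.norm_of_nonneg (mul_nonneg (gauss_nonneg _ _) (weight_nonneg _))]
        calc gauss 1 (y - μ) * ((2 / Real.pi) * (1 + l ^ 2)⁻¹)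
            ≤ (Real.sqrt (2 * Real.pi * 1))⁻¹ * 1 :=
              mul_le_mul (gauss_le _) (weight_le_one l) (weight_nonneg l) (by positivity)
          _ = _ := mul_one _
    · -- integrability of l ↦ ∫ μ, ‖F (l, μ)‖
      have haesm : AEStronglyMeasurable (fun l => ∫ μ, ‖F (l, μ)‖) ν :=
        hF_aesm.norm.integral_prod_right'
      apply Integrable.mono'
        ((integrable_inv_one_add_sq.const_mul ((Real.sqrt (2 * Real.pi * 1))⁻¹ * (2 / Real.pi))).integrableOn)
        haesm
      filter_upwards [ae_restrict_mem measurableSet_Ioi] with l hl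
      have hl0 : (0:ℝ) < l := hl
      have h1 : ∀ μ : ℝ, ‖F (l, μ)‖ = F (l, μ) := fun μ =>
        Real.norm_of_nonneg (mul_nonneg (gauss_nonneg _ _)
          (mul_nonneg (gauss_nonneg _ _) (weight_nonneg _)))
      have h2 : (0:ℝ) ≤ ∫ μ, ‖F (l, μ)‖ := integral_nonneg fun μ => norm_nonneg _
      rw [Real.norm_of_nonneg h2]
      have h3 : ∫ μ, ‖F (l, μ)‖ = ∫ μ, F (l, μ) := by
        congr 1; funext μ; exact h1 μ
      rw [h3]
      have hub : ∫ μ, F (l, μ) ≤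
          ∫ μ, ((Real.sqrt (2 * Real.pi * 1))⁻¹ * ((2 / Real.pi) * (1 + l ^ 2)⁻¹)) * gauss (l ^ 2 * τ ^ 2) μ := by
        apply integral_mono_of_nonneg
        · exact Eventually.of_forall fun μ => mul_nonneg (gauss_nonneg _ _)
            (mul_nonneg (gauss_nonneg _ _) (weight_nonneg _))
        · exact (gauss_integrable (by positivity)).const_mul _
        · apply Eventually.of_forall
          intro μ
          simp only [hF]
          calc gauss 1 (y - μ) * (gauss (l ^ 2 * τ ^ 2) μ * ((2 / Real.pi) * (1 + l ^ 2)⁻¹))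
              ≤ (Real.sqrt (2 * Real.pi * 1))⁻¹ * (gauss (l ^ 2 * τ ^ 2) μ * ((2 / Real.pi) * (1 + l ^ 2)⁻¹)) :=
                mul_le_mul_of_nonneg_right (gauss_le _)
                  (mul_nonneg (gauss_nonneg _ _) (weight_nonneg _))
            _ = ((Real.sqrt (2 * Real.pi * 1))⁻¹ * ((2 / Real.pi) * (1 + l ^ 2)⁻¹)) * gauss (l ^ 2 * τ ^ 2) μ := by
                ring
      rw [MeasureTheory.integral_const_mul, integral_gauss (by positivity : (0:ℝ) < l ^ 2 * τ ^ 2)] at hub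
      calc ∫ μ, F (l, μ) ≤ (Real.sqrt (2 * Real.pi * 1))⁻¹ * ((2 / Real.pi) * (1 + l ^ 2)⁻¹) * 1 := hub
        _ = (Real.sqrt (2 * Real.pi * 1))⁻¹ * (2 / Real.pi) * (1 + l ^ 2)⁻¹ := by ring
  have hmarg := hF_int.integral_prod_right
  have heq : (fun μ : ℝ => gauss 1 (y - μ) * hs τ μ) = fun μ => ∫ l, F (l, μ) ∂ν := by
    funext μ
    rw [hs, ← MeasureTheory.integral_const_mul]
  rw [heq]
  exact hmarg

lemma hs_scale {σ τ : ℝ} (hσ : 0 < σ) (hστ : σ ≤ τ) {μ : ℝ} (hμ : μ ≠ 0) :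
    hs τ μ ≤ (τ / σ) * hs σ μ := by
  have hτ : 0 < τ := hσ.trans_le hστ
  set c : ℝ := σ / τ with hc
  have hc0 : 0 < c := div_pos hσ hτ
  have hc1 : c ≤ 1 := (div_le_one hτ).mpr hστ
  have hcv := integral_comp_mul_left_Ioi
    (fun l => gauss (l ^ 2 * τ ^ 2) μ * ((2 / Real.pi) * (1 + l ^ 2)⁻¹)) 0 hc0
  rw [mul_zero] at hcv
  -- hcv : ∫ u in Ioi 0, gauss ((c*u)^2*τ^2) μ * (...) = c⁻¹ • (hs τ μ)
  have h1 : hs τ μ =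
      ∫ u in Ioi (0:ℝ), c * (gauss ((c * u) ^ 2 * τ ^ 2) μ * ((2 / Real.pi) * (1 + (c * u) ^ 2)⁻¹)) := by
    rw [MeasureTheory.integral_const_mul, hcv, smul_eq_mul, hs]
    rw [← mul_assoc, mul_inv_cancel₀ hc0.ne', one_mul]
  rw [h1]
  have h2 : (τ / σ) * hs σ μ =
      ∫ u in Ioi (0:ℝ), (τ / σ) * (gauss (u ^ 2 * σ ^ 2) μ * ((2 / Real.pi) * (1 + u ^ 2)⁻¹)) := by
    rw [MeasureTheory.integral_const_mul, hs]
  rw [h2]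
  apply integral_mono_of_nonneg
  · exact Eventually.of_forall fun u => mul_nonneg hc0.le
      (mul_nonneg (gauss_nonneg _ _) (weight_nonneg _))
  · exact (hs_integrand_integrable hσ hμ).const_mul _
  · filter_upwards [ae_restrict_mem measurableSet_Ioi] with u hu
    have hu0 : (0:ℝ) < u := hu
    have hg : (c * u) ^ 2 * τ ^ 2 = u ^ 2 * σ ^ 2 := by
      rw [hc]; field_simp
    rw [hg]
    have hw : c * (1 + (c * u) ^ 2)⁻¹ ≤ (τ / σ) * (1 + u ^ 2)⁻¹ := by
      have hτσ : τ / σ = c⁻¹ := by rw [hc, inv_div]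
      rw [hτσ]
      have hd1 : (0:ℝ) < 1 + (c * u) ^ 2 := by positivity
      have hd2 : (0:ℝ) < 1 + u ^ 2 := by positivity
      have hcinv : c ≤ c⁻¹ := by
        have h := mul_inv_cancel₀ hc0.ne'
        nlinarith [inv_pos.mpr hc0]
      have key : c * (1 + u ^ 2) ≤ c⁻¹ * (1 + (c * u) ^ 2) := by
        have hexp : c⁻¹ * (1 + (c * u) ^ 2) = c⁻¹ + c * u ^ 2 := by
          field_simp
        rw [hexp]
        nlinarith [sq_nonneg u]
      rw [← div_eq_mul_inv, ← div_eq_mul_inv, div_le_div_iff₀ hd1 hd2]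
      linarith [key]
    calc c * (gauss (u ^ 2 * σ ^ 2) μ * ((2 / Real.pi) * (1 + (c * u) ^ 2)⁻¹))
        = (gauss (u ^ 2 * σ ^ 2) μ * (2 / Real.pi)) * (c * (1 + (c * u) ^ 2)⁻¹) := by ring
      _ ≤ (gauss (u ^ 2 * σ ^ 2) μ * (2 / Real.pi)) * ((τ / σ) * (1 + u ^ 2)⁻¹) := by
          apply mul_le_mul_of_nonneg_left hw (mul_nonneg (gauss_nonneg _ _) (by positivity))
      _ = (τ / σ) * (gauss (u ^ 2 * σ ^ 2) μ * ((2 / Real.pi) * (1 + u ^ 2)⁻¹)) := by ring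

lemma marg_scale {σ τ : ℝ} (hσ : 0 < σ) (hστ : σ ≤ τ) (y : ℝ) :
    marg y τ ≤ (τ / σ) * marg y σ := by
  rw [marg, marg, ← MeasureTheory.integral_const_mul]
  apply integral_mono_of_nonneg
  · exact Eventually.of_forall fun μ => mul_nonneg (gauss_nonneg _ _) (hs_nonneg _ _)
  · exact (marg_integrand_integrable hσ y).const_mul _
  · have h0 : ∀ᵐ μ : ℝ, μ ≠ 0 := by
      rw [ae_iff]
      have : {μ : ℝ | ¬μ ≠ 0} = {0} := by ext μ; simp
      rw [this]
      exact measure_singleton 0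
    filter_upwards [h0] with μ hμ
    calc gauss 1 (y - μ) * hs τ μ ≤ gauss 1 (y - μ) * ((τ / σ) * hs σ μ) :=
          mul_le_mul_of_nonneg_left (hs_scale hσ hστ hμ) (gauss_nonneg _ _)
      _ = (τ / σ) * (gauss 1 (y - μ) * hs σ μ) := by ring

/-- Posterior expectation of `f(τ)` given `Y` under the exponential hyperprior
`π(τ) = n e^{−nτ} 1{τ>0}`. -/
noncomputable def postExp (n : ℕ) (f : ℝ → ℝ) (Y : Fin n → ℝ) : ℝ :=
  (∫ τ in Set.Ioi (0 : ℝ), f τ * ((n : ℝ) * Real.exp (-(n : ℝ) * τ)) * ∏ i, marg (Y i) τ) /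
    ∫ τ in Set.Ioi (0 : ℝ), ((n : ℝ) * Real.exp (-(n : ℝ) * τ)) * ∏ i, marg (Y i) τ

lemma prod_pow_le {σ τ : ℝ} (hσ : 0 < σ) (hστ : σ ≤ τ) (n : ℕ) (Y : Fin n → ℝ) :
    σ ^ n * ∏ i, marg (Y i) τ ≤ τ ^ n * ∏ i, marg (Y i) σ := by
  have h1 : ∏ i, marg (Y i) τ ≤ ∏ i, ((τ / σ) * marg (Y i) σ) :=
    Finset.prod_le_prod (fun i _ => marg_nonneg _ _) (fun i _ => marg_scale hσ hστ (Y i))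
  rw [Finset.prod_mul_distrib, Finset.prod_const, Finset.card_univ, Fintype.card_fin] at h1
  have hσn : (0:ℝ) < σ ^ n := by positivity
  calc σ ^ n * ∏ i, marg (Y i) τ
      ≤ σ ^ n * ((τ / σ) ^ n * ∏ i, marg (Y i) σ) := by
        exact mul_le_mul_of_nonneg_left h1 hσn.le
    _ = τ ^ n * ∏ i, marg (Y i) σ := by
        rw [div_pow]
        field_simp

/-- Universal bound on the posterior mean of `τ` under the exponential hyperprior. -/
theorem horseshoe_posterior_mean_tau_universal_bound
    (n : ℕ) (hn : 1 ≤ n) (Y : Fin n → ℝ) :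
    postExp n (fun t => t) Y ≤ ((n : ℝ) + 1) / n := by
  have hn0 : (0:ℝ) < (n:ℝ) := by exact_mod_cast hn
  set A : ℝ → ℝ := fun τ => ((n:ℝ) * Real.exp (-(n:ℝ) * τ)) * ∏ i, marg (Y i) τ with hA_def
  set B : ℝ → ℝ := fun τ => τ * ((n:ℝ) * Real.exp (-(n:ℝ) * τ)) * ∏ i, marg (Y i) τ with hB_def
  have hpost : postExp n (fun t => t) Y
      = (∫ τ in Set.Ioi (0:ℝ), B τ) / ∫ τ in Set.Ioi (0:ℝ), A τ := rfl
  rw [hpost]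
  have hprod_nonneg : ∀ τ : ℝ, (0:ℝ) ≤ ∏ i, marg (Y i) τ :=
    fun τ => Finset.prod_nonneg fun i _ => marg_nonneg _ _
  have hA_nonneg : ∀ τ, 0 ≤ A τ := fun τ =>
    mul_nonneg (by positivity) (hprod_nonneg τ)
  have hD_nonneg : 0 ≤ ∫ τ in Set.Ioi (0:ℝ), A τ :=
    setIntegral_nonneg measurableSet_Ioi fun τ _ => hA_nonneg τ
  rcases eq_or_lt_of_le hD_nonneg with hD0 | hDpos
  · rw [← hD0, div_zero]
    exact div_nonneg (by positivity) (Nat.cast_nonneg n)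
  have hN_nonneg : 0 ≤ ∫ τ in Set.Ioi (0:ℝ), B τ := by
    apply setIntegral_nonneg measurableSet_Ioi
    intro τ hτ
    exact mul_nonneg (mul_nonneg (le_of_lt hτ) (by positivity)) (hprod_nonneg τ)
  rcases eq_or_lt_of_le hN_nonneg with hN0 | hNpos
  · rw [← hN0, zero_div]
    exact div_nonneg (by positivity) (Nat.cast_nonneg n)
  -- integrability of A and B from nonvanishing integrals
  have hA_int : Integrable A (volume.restrict (Set.Ioi (0:ℝ))) := by
    by_contra h
    rw [integral_undef h] at hDpos
    exact lt_irrefl _ hDpos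
  have hB_int : Integrable B (volume.restrict (Set.Ioi (0:ℝ))) := by
    by_contra h
    rw [integral_undef h] at hNpos
    exact lt_irrefl _ hNpos
  -- the Gamma weights
  set u : ℝ → ℝ := fun t => t ^ n * Real.exp (-(n:ℝ) * t) with hu_def
  set v : ℝ → ℝ := fun t => t ^ (n + 1) * Real.exp (-(n:ℝ) * t) with hv_def
  have hu_int : Integrable u (volume.restrict (Set.Ioi (0:ℝ))) := by
    have h := integrableOn_rpow_mul_exp_neg_mul_rpow
      (show (-1:ℝ) < (n:ℝ) by linarith) (one_pos : (0:ℝ) < 1) hn0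
    have heq : (fun x : ℝ => x ^ ((n:ℕ):ℝ) * Real.exp (-(n:ℝ) * x ^ (1:ℝ))) = u := by
      funext x; rw [Real.rpow_natCast, Real.rpow_one, hu_def]
    rw [heq] at h
    exact h
  have hv_int : Integrable v (volume.restrict (Set.Ioi (0:ℝ))) := by
    have h := integrableOn_rpow_mul_exp_neg_mul_rpow
      (show (-1:ℝ) < ((n+1:ℕ):ℝ) by push_cast; linarith) (one_pos : (0:ℝ) < 1) hn0
    have heq : (fun x : ℝ => x ^ ((n+1:ℕ):ℝ) * Real.exp (-(n:ℝ) * x ^ (1:ℝ))) = v := by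
      funext x; rw [Real.rpow_natCast, Real.rpow_one, hv_def]
    rw [heq] at h
    exact h
  have hU_val : ∫ t in Set.Ioi (0:ℝ), u t = (1 / (n:ℝ)) ^ ((n:ℝ) + 1) * Real.Gamma ((n:ℝ) + 1) := by
    rw [← Real.integral_rpow_mul_exp_neg_mul_Ioi (by positivity : (0:ℝ) < (n:ℝ) + 1) hn0]
    congr 1
    funext t
    simp only [hu_def]
    rw [show (n:ℝ) + 1 - 1 = ((n:ℕ):ℝ) by ring, Real.rpow_natCast, neg_mul]
  have hV_val : ∫ t in Set.Ioi (0:ℝ), v t = (1 / (n:ℝ)) ^ ((n:ℝ) + 2) * Real.Gamma ((n:ℝ) + 2) := by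
    rw [← Real.integral_rpow_mul_exp_neg_mul_Ioi (by positivity : (0:ℝ) < (n:ℝ) + 2) hn0]
    congr 1
    funext t
    simp only [hv_def]
    rw [show (n:ℝ) + 2 - 1 = ((n+1:ℕ):ℝ) by push_cast; ring, Real.rpow_natCast, neg_mul]
  have hU_pos : 0 < ∫ t in Set.Ioi (0:ℝ), u t := by
    rw [hU_val]
    have := Real.Gamma_pos_of_pos (show (0:ℝ) < (n:ℝ) + 1 by positivity)
    positivity
  -- Chebyshev-type inequality via a double integral
  have hmem : ∀ᵐ p ∂((volume.restrict (Set.Ioi (0:ℝ))).prod (volume.restrict (Set.Ioi (0:ℝ)))),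
      p ∈ (Set.Ioi (0:ℝ)) ×ˢ (Set.Ioi (0:ℝ)) := by
    rw [Measure.prod_restrict]
    exact ae_restrict_mem (measurableSet_Ioi.prod measurableSet_Ioi)
  have hptwise : ∀ᵐ p ∂((volume.restrict (Set.Ioi (0:ℝ))).prod (volume.restrict (Set.Ioi (0:ℝ)))),
      0 ≤ v p.1 * A p.2 - B p.1 * u p.2 - u p.1 * B p.2 + A p.1 * v p.2 := by
    filter_upwards [hmem] with p hp
    obtain ⟨hp1, hp2⟩ := hp
    have hbracket : 0 ≤ (p.1 - p.2) * (p.1 ^ n * ∏ i, marg (Y i) p.2 - p.2 ^ n * ∏ i, marg (Y i) p.1) := by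
      rcases le_total p.2 p.1 with h | h
      · exact mul_nonneg (sub_nonneg.mpr h) (sub_nonneg.mpr (prod_pow_le hp2 h n Y))
      · have h1 : p.1 - p.2 ≤ 0 := sub_nonpos.mpr h
        have h2 : p.1 ^ n * ∏ i, marg (Y i) p.2 - p.2 ^ n * ∏ i, marg (Y i) p.1 ≤ 0 :=
          sub_nonpos.mpr (prod_pow_le hp1 h n Y)
        have := mul_nonneg (neg_nonneg.mpr h1) (neg_nonneg.mpr h2)
        rwa [neg_mul_neg] at this
    have hexpand : v p.1 * A p.2 - B p.1 * u p.2 - u p.1 * B p.2 + A p.1 * v p.2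
        = ((n:ℝ) * (Real.exp (-(n:ℝ) * p.1) * Real.exp (-(n:ℝ) * p.2)))
          * ((p.1 - p.2) * (p.1 ^ n * ∏ i, marg (Y i) p.2 - p.2 ^ n * ∏ i, marg (Y i) p.1)) := by
      rw [hA_def, hB_def, hu_def, hv_def]
      ring
    rw [hexpand]
    exact mul_nonneg (by positivity) hbracket
  have hkey : (∫ τ in Set.Ioi (0:ℝ), B τ) * ∫ t in Set.Ioi (0:ℝ), u t
      ≤ (∫ τ in Set.Ioi (0:ℝ), A τ) * ∫ t in Set.Ioi (0:ℝ), v t := by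
    have h0 : 0 ≤ ∫ p, (v p.1 * A p.2 - B p.1 * u p.2 - u p.1 * B p.2 + A p.1 * v p.2)
        ∂((volume.restrict (Set.Ioi (0:ℝ))).prod (volume.restrict (Set.Ioi (0:ℝ)))) :=
      integral_nonneg_of_ae hptwise
    have h12 : Integrable (fun z : ℝ × ℝ => v z.1 * A z.2 - B z.1 * u z.2)
        ((volume.restrict (Set.Ioi (0:ℝ))).prod (volume.restrict (Set.Ioi (0:ℝ)))) :=
      (hv_int.mul_prod hA_int).sub (hB_int.mul_prod hu_int)
    have h123 : Integrable (fun z : ℝ × ℝ => v z.1 * A z.2 - B z.1 * u z.2 - u z.1 * B z.2)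
        ((volume.restrict (Set.Ioi (0:ℝ))).prod (volume.restrict (Set.Ioi (0:ℝ)))) :=
      h12.sub (hu_int.mul_prod hB_int)
    rw [integral_add h123 (hA_int.mul_prod hv_int),
        integral_sub h12 (hu_int.mul_prod hB_int),
        integral_sub (hv_int.mul_prod hA_int) (hB_int.mul_prod hu_int),
        integral_prod_mul, integral_prod_mul, integral_prod_mul, integral_prod_mul] at h0
    nlinarith [h0]
  -- identity (∫ v) * n = (n+1) * (∫ u)
  have hVU : (∫ t in Set.Ioi (0:ℝ), v t) * (n:ℝ) = ((n:ℝ) + 1) * ∫ t in Set.Ioi (0:ℝ), u t := by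
    rw [hU_val, hV_val,
      show (n:ℝ) + 2 = ((n:ℝ) + 1) + 1 by ring,
      Real.Gamma_add_one (by positivity : (n:ℝ) + 1 ≠ 0),
      Real.rpow_add (by positivity : (0:ℝ) < 1 / (n:ℝ)), Real.rpow_one]
    field_simp
  rw [div_le_div_iff₀ hDpos hn0]
  -- goal : N * n ≤ (n+1) * D
  have hfin : ((∫ τ in Set.Ioi (0:ℝ), B τ) * (n:ℝ)) * ∫ t in Set.Ioi (0:ℝ), u t
      ≤ (((n:ℝ) + 1) * ∫ τ in Set.Ioi (0:ℝ), A τ) * ∫ t in Set.Ioi (0:ℝ), u t := by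
    calc ((∫ τ in Set.Ioi (0:ℝ), B τ) * (n:ℝ)) * ∫ t in Set.Ioi (0:ℝ), u t
        = ((∫ τ in Set.Ioi (0:ℝ), B τ) * ∫ t in Set.Ioi (0:ℝ), u t) * (n:ℝ) := by ring
      _ ≤ ((∫ τ in Set.Ioi (0:ℝ), A τ) * ∫ t in Set.Ioi (0:ℝ), v t) * (n:ℝ) :=
          mul_le_mul_of_nonneg_right hkey hn0.le
      _ = (∫ τ in Set.Ioi (0:ℝ), A τ) * ((∫ t in Set.Ioi (0:ℝ), v t) * (n:ℝ)) := by ring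
      _ = (((n:ℝ) + 1) * ∫ τ in Set.Ioi (0:ℝ), A τ) * ∫ t in Set.Ioi (0:ℝ), u t := by
          rw [hVU]; ring
  exact le_of_mul_le_mul_right hfin hU_pos
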